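/- Fix an integer S ≥ 1. Let a : ℕ → ℝ with a_i ≥ 0 and Σ_{i=0}^{∞} a_i = 1, extended by a_k = 0 for k < 0, and let q : ℕ → ℝ with q_i ≥ 0 and Σ_{i=0}^{∞} q_i = 1 satisfy the balance equations q_j = a_j·(Σ_{i=0}^{S} q_i) + Σ_{i=S+1}^{∞} q_i·a_{j−i+S} for all j ∈ ℕ. Define A(z) = Σ_{i=0}^{∞} a_i z^i and N(z) = Σ_{i=0}^{S−1} q_i Σ_{l=i}^{S−1} z^l. Then every z ∈ ℂ with 0 < |z| < 1 and z^S = A(z) satisfies N(z) = 0. -/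

import Mathlib

/-- Extension of a sequence on ℕ to ℤ by zero on negative integers. -/
def aext (a : ℕ → ℝ) : ℤ → ℝ := fun k => if 0 ≤ k then a k.toNat else 0

lemma aext_nonneg (a : ℕ → ℝ) (h : ∀ i, 0 ≤ a i) (k : ℤ) : 0 ≤ aext a k := by
  unfold aext; split <;> simp [h]

lemma aext_le_one (a : ℕ → ℝ) (h : ∀ i, 0 ≤ a i) (ha : HasSum a 1) (k : ℤ) :
    aext a k ≤ 1 := by
  unfold aext; split
  · exact le_hasSum ha k.toNat fun j _ => h j
  · exact zero_le_one

lemma hasSum_aext_shift (a : ℕ → ℝ) (z : ℂ) (m : ℕ) {t : ℂ}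
    (h : HasSum (fun i => (a i : ℂ) * z ^ i) t) :
    HasSum (fun j : ℕ => ((aext a ((j : ℤ) - m) : ℝ) : ℂ) * z ^ j) (z ^ m * t) := by
  set f : ℕ → ℂ := fun j => ((aext a ((j : ℤ) - m) : ℝ) : ℂ) * z ^ j with hf
  have h1 : HasSum (fun j : ℕ => f (j + m)) (t * z ^ m) := by
    have h2 := h.mul_right (z ^ m)
    refine h2.congr_fun fun j => ?_
    simp only [hf, aext]
    have : ((j + m : ℕ) : ℤ) - m = (j : ℤ) := by push_cast; ring
    rw [this]
    simp [pow_add, mul_assoc]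
  have h3 := (hasSum_nat_add_iff (f := f) m).1 h1
  have h4 : ∑ i ∈ Finset.range m, f i = 0 := by
    apply Finset.sum_eq_zero
    intro i hi
    simp only [Finset.mem_range] at hi
    have hneg : ¬ (0 : ℤ) ≤ (i : ℤ) - m := by omega
    have : aext a ((i : ℤ) - m) = 0 := if_neg hneg
    simp [hf, this]
  rw [h4, add_zero, mul_comm] at h3
  exact h3

lemma hasSum_aext_shift_real (a : ℕ → ℝ) (r : ℝ) (m : ℕ) {t : ℝ}
    (h : HasSum (fun i => a i * r ^ i) t) :
    HasSum (fun j : ℕ => aext a ((j : ℤ) - m) * r ^ j) (r ^ m * t) := by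
  set f : ℕ → ℝ := fun j => aext a ((j : ℤ) - m) * r ^ j with hf
  have h1 : HasSum (fun j : ℕ => f (j + m)) (t * r ^ m) := by
    have h2 := h.mul_right (r ^ m)
    refine h2.congr_fun fun j => ?_
    simp only [hf, aext]
    have : ((j + m : ℕ) : ℤ) - m = (j : ℤ) := by push_cast; ring
    rw [this]
    simp [pow_add, mul_assoc]
  have h3 := (hasSum_nat_add_iff (f := f) m).1 h1
  have h4 : ∑ i ∈ Finset.range m, f i = 0 := by
    apply Finset.sum_eq_zero
    intro i hi
    simp only [Finset.mem_range] at hi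
    have hneg : ¬ (0 : ℤ) ≤ (i : ℤ) - m := by omega
    have : aext a ((i : ℤ) - m) = 0 := if_neg hneg
    simp [hf, this]
  rw [h4, add_zero, mul_comm] at h3
  exact h3

set_option maxHeartbeats 1000000 in
/-- If q is a stationary distribution of the queue recursion, then every
z with 0 < |z| < 1 and z^S = A(z) satisfies N(z) = 0. -/
theorem N_vanishes_at_roots
    (S : ℕ) (hS : 1 ≤ S)
    (a : ℕ → ℝ) (ha_nonneg : ∀ i, 0 ≤ a i) (ha_sum : HasSum a 1)
    (q : ℕ → ℝ) (hq_nonneg : ∀ i, 0 ≤ q i) (hq_sum : HasSum q 1)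
    (h_balance : ∀ j : ℕ,
      q j = a j * (∑ i ∈ Finset.range (S + 1), q i) +
        ∑' i : ℕ, if S + 1 ≤ i then q i * aext a ((j : ℤ) - (i : ℤ) + (S : ℤ)) else 0) :
    ∀ z : ℂ, 0 < ‖z‖ → ‖z‖ < 1 → z ^ S = (∑' i : ℕ, (a i : ℂ) * z ^ i) →
      ∑ i ∈ Finset.range S, (q i : ℂ) * ∑ l ∈ Finset.Ico i S, z ^ l = 0 := by
  intro z hz0 hz1 hzA
  have hzle : ‖z‖ ≤ 1 := hz1.le
  have hzne : z ≠ 0 := norm_pos_iff.1 hz0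
  have hzone : z ≠ 1 := by
    intro h; rw [h] at hz1; simp at hz1
  have hznn : (0:ℝ) ≤ ‖z‖ := norm_nonneg z
  -- summability of the complex series
  have sAz : Summable (fun i => (a i : ℂ) * z ^ i) := by
    refine Summable.of_norm_bounded ha_sum.summable fun i => ?_
    rw [norm_mul, norm_pow, Complex.norm_real, Real.norm_eq_abs,
      abs_of_nonneg (ha_nonneg i)]
    calc a i * ‖z‖ ^ i ≤ a i * 1 := by
          exact mul_le_mul_of_nonneg_left (pow_le_one₀ hznn hzle) (ha_nonneg i)
      _ = a i := mul_one _
  have sQz : Summable (fun i => (q i : ℂ) * z ^ i) := by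
    refine Summable.of_norm_bounded hq_sum.summable fun i => ?_
    rw [norm_mul, norm_pow, Complex.norm_real, Real.norm_eq_abs,
      abs_of_nonneg (hq_nonneg i)]
    calc q i * ‖z‖ ^ i ≤ q i * 1 := by
          exact mul_le_mul_of_nonneg_left (pow_le_one₀ hznn hzle) (hq_nonneg i)
      _ = q i := mul_one _
  set A : ℂ := ∑' i, (a i : ℂ) * z ^ i with hA_def
  have hA : HasSum (fun i => (a i : ℂ) * z ^ i) A := sAz.hasSum
  set Q : ℂ := ∑' i, (q i : ℂ) * z ^ i with hQ_def
  have hQ : HasSum (fun i => (q i : ℂ) * z ^ i) Q := sQz.hasSum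
  set C : ℝ := ∑ i ∈ Finset.range (S + 1), q i with hC_def
  set P : ℂ := ∑ i ∈ Finset.range (S + 1), (q i : ℂ) * z ^ i with hP_def
  -- the real norm series
  have sAr : Summable (fun i => a i * ‖z‖ ^ i) := by
    refine Summable.of_nonneg_of_le (fun i => mul_nonneg (ha_nonneg i) (pow_nonneg hznn i))
      (fun i => ?_) ha_sum.summable
    calc a i * ‖z‖ ^ i ≤ a i * 1 :=
        mul_le_mul_of_nonneg_left (pow_le_one₀ hznn hzle) (ha_nonneg i)
      _ = a i := mul_one _
  set t : ℝ := ∑' i, a i * ‖z‖ ^ i with ht_def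
  have ht : HasSum (fun i => a i * ‖z‖ ^ i) t := sAr.hasSum
  have ht0 : 0 ≤ t := tsum_nonneg fun i => mul_nonneg (ha_nonneg i) (pow_nonneg hznn i)
  have ht1 : t ≤ 1 := by
    rw [ht_def, ← ha_sum.tsum_eq]
    refine Summable.tsum_le_tsum (fun i => ?_) sAr ha_sum.summable
    calc a i * ‖z‖ ^ i ≤ a i * 1 :=
        mul_le_mul_of_nonneg_left (pow_le_one₀ hznn hzle) (ha_nonneg i)
      _ = a i := mul_one _
  -- the double-indexed family
  set F : ℕ × ℕ → ℂ := fun p =>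
    if S + 1 ≤ p.1 then
      (q p.1 : ℂ) * (((aext a ((p.2 : ℤ) - p.1 + S)) : ℝ) * z ^ p.2) else 0 with hF_def
  set R : ℕ → ℂ := fun i => if S + 1 ≤ i then (q i : ℂ) * (z ^ (i - S) * A) else 0 with hR_def
  have hcast : ∀ i : ℕ, S + 1 ≤ i → ∀ j : ℕ, (j : ℤ) - i + S = (j : ℤ) - ((i - S : ℕ) : ℤ) := by
    intro i hi j
    have : ((i - S : ℕ) : ℤ) = (i : ℤ) - S := by omega
    rw [this]; ring
  have hrow : ∀ i, HasSum (fun j => F (i, j)) (R i) := by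
    intro i
    by_cases h : S + 1 ≤ i
    · simp only [hF_def, hR_def, if_pos h]
      have h1 := (hasSum_aext_shift a z (i - S) hA).mul_left (q i : ℂ)
      refine h1.congr_fun fun j => ?_
      rw [hcast i h j]
    · simp only [hF_def, hR_def, if_neg h]
      exact hasSum_zero
  set G : ℕ × ℕ → ℝ := fun p =>
    if S + 1 ≤ p.1 then q p.1 * (aext a ((p.2 : ℤ) - p.1 + S) * ‖z‖ ^ p.2) else 0 with hG_def
  have hFG : ∀ p, ‖F p‖ = G p := by
    intro p
    simp only [hF_def, hG_def]
    split
    · rw [norm_mul, norm_mul, norm_pow, Complex.norm_real, Complex.norm_real,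
        Real.norm_eq_abs, Real.norm_eq_abs, abs_of_nonneg (hq_nonneg _),
        abs_of_nonneg (aext_nonneg a ha_nonneg _)]
    · simp
  have hGrow : ∀ i, HasSum (fun j => G (i, j))
      (if S + 1 ≤ i then q i * (‖z‖ ^ (i - S) * t) else 0) := by
    intro i
    by_cases h : S + 1 ≤ i
    · simp only [hG_def, if_pos h]
      have h1 := (hasSum_aext_shift_real a ‖z‖ (i - S) ht).mul_left (q i)
      refine h1.congr_fun fun j => ?_
      rw [hcast i h j]
    · simp only [hG_def, if_neg h]
      exact hasSum_zero
  have hGsum : Summable G := by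
    refine (summable_prod_of_nonneg ?_).2 ⟨fun i => (hGrow i).summable, ?_⟩
    · intro p
      simp only [hG_def]
      split
      · exact mul_nonneg (hq_nonneg _)
          (mul_nonneg (aext_nonneg a ha_nonneg _) (pow_nonneg hznn _))
      · exact le_refl 0
    · refine Summable.of_nonneg_of_le (fun i => tsum_nonneg fun j => ?_) (fun i => ?_)
        hq_sum.summable
      · simp only [hG_def]
        split
        · exact mul_nonneg (hq_nonneg _)
            (mul_nonneg (aext_nonneg a ha_nonneg _) (pow_nonneg hznn _))
        · exact le_refl 0
      · rw [(hGrow i).tsum_eq]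
        split
        · have h1 : ‖z‖ ^ (i - S) * t ≤ 1 * 1 :=
            mul_le_mul (pow_le_one₀ hznn hzle) ht1 ht0 zero_le_one
          have h2 : q i * (‖z‖ ^ (i - S) * t) ≤ q i * 1 :=
            mul_le_mul_of_nonneg_left (by linarith) (hq_nonneg i)
          linarith
        · exact hq_nonneg i
  have hFsum : Summable F := by
    refine Summable.of_norm ?_
    exact hGsum.congr fun p => (hFG p).symm
  set s : ℂ := ∑' p, F p with hs_def
  have hsF : HasSum F s := hFsum.hasSum
  have hRs : HasSum R s := hsF.prod_fiberwise hrow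
  -- the swapped family
  have hswap : HasSum (fun p : ℕ × ℕ => F (p.2, p.1)) s :=
    (Equiv.prodComm ℕ ℕ).hasSum_iff.2 hsF
  -- column sums via the balance equations
  have sInner : ∀ j, Summable
      (fun i => if S + 1 ≤ i then q i * aext a ((j : ℤ) - i + S) else 0) := by
    intro j
    refine Summable.of_nonneg_of_le (fun i => ?_) (fun i => ?_) hq_sum.summable
    · split
      · exact mul_nonneg (hq_nonneg _) (aext_nonneg a ha_nonneg _)
      · exact le_refl 0
    · split
      · calc q i * aext a ((j : ℤ) - i + S) ≤ q i * 1 :=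
            mul_le_mul_of_nonneg_left (aext_le_one a ha_nonneg ha_sum _) (hq_nonneg i)
          _ = q i := mul_one _
      · exact hq_nonneg i
  have hcol : ∀ j, HasSum (fun i => F (i, j)) (((q j - a j * C : ℝ) : ℂ) * z ^ j) := by
    intro j
    have h1 : HasSum (fun i => if S + 1 ≤ i then q i * aext a ((j : ℤ) - i + S) else 0)
        (q j - a j * C) := by
      have h2 := (sInner j).hasSum
      have h3 : (∑' i, if S + 1 ≤ i then q i * aext a ((j : ℤ) - i + S) else 0)
          = q j - a j * C := by
        have := h_balance j
        linarith
      rwa [h3] at h2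
    have h4 : HasSum
        (fun i => ((if S + 1 ≤ i then q i * aext a ((j : ℤ) - i + S) else 0 : ℝ) : ℂ))
        ((q j - a j * C : ℝ) : ℂ) := Complex.hasSum_ofReal.2 h1
    have h5 := h4.mul_right (z ^ j)
    refine h5.congr_fun fun i => ?_
    simp only [hF_def]
    split
    · push_cast; ring
    · simp
  have hColS : HasSum (fun j => ((q j - a j * C : ℝ) : ℂ) * z ^ j) s :=
    hswap.prod_fiberwise hcol
  -- identify s = Q - C*A
  have hLeft : HasSum (fun j => ((q j - a j * C : ℝ) : ℂ) * z ^ j) (Q - (C : ℂ) * A) := by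
    have := hQ.sub (hA.mul_left (C : ℂ))
    refine this.congr_fun fun j => ?_
    push_cast; ring
  have hsQCA : s = Q - (C : ℂ) * A := hColS.unique hLeft
  -- identify s * z^S = (Q - P) * A
  have htail : HasSum (fun n => (q (n + (S + 1)) : ℂ) * z ^ (n + (S + 1))) (Q - P) := by
    refine (hasSum_nat_add_iff (f := fun i => (q i : ℂ) * z ^ i) (S + 1)).2 ?_
    rw [← hP_def, sub_add_cancel]
    exact hQ
  have hind : HasSum (fun i => if S + 1 ≤ i then (q i : ℂ) * z ^ i else 0) (Q - P) := by
    have hinj : Function.Injective (fun n : ℕ => n + (S + 1)) :=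
      fun x y h => Nat.add_right_cancel h
    refine (hinj.hasSum_iff ?_).1 ?_
    · intro x hx
      have : ¬ S + 1 ≤ x := by
        intro h
        exact hx ⟨x - (S + 1), by show x - (S + 1) + (S + 1) = x; omega⟩
      simp [this]
    · refine htail.congr_fun fun n => ?_
      have : S + 1 ≤ n + (S + 1) := by omega
      simp [this]
      exact fun h' => absurd h' (by omega)
  have hRzS : HasSum (fun i => R i * z ^ S) ((Q - P) * A) := by
    have := hind.mul_right A
    refine this.congr_fun fun i => ?_
    simp only [hR_def]
    by_cases h : S + 1 ≤ i
    · simp only [if_pos h]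
      have hpow : z ^ (i - S) * z ^ S = z ^ i := by
        rw [← pow_add, Nat.sub_add_cancel (by omega : S ≤ i)]
      calc (q i : ℂ) * (z ^ (i - S) * A) * z ^ S
          = (q i : ℂ) * (z ^ (i - S) * z ^ S) * A := by ring
        _ = (q i : ℂ) * z ^ i * A := by rw [hpow]
    · simp [if_neg h]
      rw [if_neg (by omega), if_neg (by omega)]
  have hszS : s * z ^ S = (Q - P) * A := (hRs.mul_right (z ^ S)).unique hRzS
  -- combine
  have hAz : A = z ^ S := hzA.symm
  have hkey : (C : ℂ) * z ^ S = P := by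
    have h0 : (Q - (C : ℂ) * A) * z ^ S = (Q - P) * A := by
      rw [← hsQCA]; exact hszS
    rw [hAz] at h0
    have hzS : z ^ S ≠ 0 := pow_ne_zero _ hzne
    have h2 := mul_right_cancel₀ hzS h0
    exact sub_right_injective h2
  have key2 : ∑ i ∈ Finset.range (S + 1), (q i : ℂ) * (z ^ S - z ^ i) = 0 := by
    have : ∑ i ∈ Finset.range (S + 1), (q i : ℂ) * (z ^ S - z ^ i)
        = (C : ℂ) * z ^ S - P := by
      rw [hP_def, hC_def]
      push_cast
      rw [Finset.sum_mul]
      rw [← Finset.sum_sub_distrib]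
      congr 1; ext i; ring
    rw [this, hkey, sub_self]
  have key3 : ∑ i ∈ Finset.range S, (q i : ℂ) * (z ^ S - z ^ i) = 0 := by
    have := key2
    rw [Finset.sum_range_succ, sub_self, mul_zero, add_zero] at this
    exact this
  have hgeo : ∀ i ∈ Finset.range S, (∑ l ∈ Finset.Ico i S, z ^ l) * (z - 1) = z ^ S - z ^ i := by
    intro i hi
    have hiS : i ≤ S := le_of_lt (Finset.mem_range.1 hi)
    rw [Finset.sum_Ico_eq_sum_range]
    have : ∑ k ∈ Finset.range (S - i), z ^ (i + k) = z ^ i * ∑ k ∈ Finset.range (S - i), z ^ k := by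
      rw [Finset.mul_sum]
      congr 1; ext k; rw [pow_add]
    rw [this, mul_assoc, geom_sum_mul, mul_sub, ← pow_add, Nat.add_sub_cancel' hiS, mul_one]
  have hfinal : (∑ i ∈ Finset.range S, (q i : ℂ) * ∑ l ∈ Finset.Ico i S, z ^ l) * (z - 1) = 0 := by
    rw [Finset.sum_mul]
    rw [← key3]
    refine Finset.sum_congr rfl fun i hi => ?_
    rw [mul_assoc, hgeo i hi]
  have hz1ne : z - 1 ≠ 0 := sub_ne_zero.2 hzone
  exact (mul_eq_zero.1 hfinal).resolve_right hz1ne
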